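/- Cut admissibility for !_{t}MacLL: in MacLL extended with the rules !L (from Γ[A] ⇒ C derive Γ[!A] ⇒ C) and !R (from A ⇒ C derive !A ⇒ !C), if Δ ⇒ A and Γ[A] ⇒ C are cut-free derivable, then Γ[Δ] ⇒ C is cut-free derivable. -/
import Mathlib


/-- Multiplicative exponential formulas: variables, unit, !, ⊗, →, ←. -/
inductive Fm : Type where
  | var : Nat → Fm
  | one : Fm
  | bang : Fm → Fm
  | tens : Fm → Fm → Fm
  | arr : Fm → Fm → Fm      -- A → B
  | larr : Fm → Fm → Fm     -- B ← A
deriving DecidableEq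

/-- Structures: binary trees of formulas, allowing the empty structure. -/
inductive Str : Type where
  | emp : Str
  | leaf : Fm → Str
  | comma : Str → Str → Str
deriving DecidableEq

/-- One-hole structure contexts. -/
inductive Ctx : Type where
  | hole : Ctx
  | commaL : Ctx → Str → Ctx
  | commaR : Str → Ctx → Ctx

/-- Plug a structure into the hole of a context. -/
def Ctx.fill : Ctx → Str → Str
  | .hole, Δ => Δ
  | .commaL c Δ, P => .comma (c.fill P) Δ
  | .commaR Γ c, P => .comma Γ (c.fill P)

/-- !Γ : bang every leaf formula of a structure. -/
def bangStr : Str → Str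
  | .emp => .emp
  | .leaf A => .leaf (.bang A)
  | .comma a b => .comma (bangStr a) (bangStr b)

/-- `StarBang Γ Γ'` : Γ' is Γ with some subset of its leaf formulas banged (!*Γ). -/
inductive StarBang : Str → Str → Prop where
  | emp : StarBang .emp .emp
  | leaf (A : Fm) : StarBang (.leaf A) (.leaf A)
  | leafBang (A : Fm) : StarBang (.leaf A) (.leaf (.bang A))
  | comma {a a' b b' : Str} : StarBang a a' → StarBang b b' →
      StarBang (.comma a b) (.comma a' b')

/-- Proper structures: nonempty binary trees of formulas (no occurrence of the
empty structure), matching the grammar Γ ::= (Γ,Γ) | F. -/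
inductive Str.proper : Str → Prop where
  | leaf (A : Fm) : (Str.leaf A).proper
  | comma {a b : Str} : a.proper → b.proper → (Str.comma a b).proper

/-- Flags selecting the optional modal/structural rules of a system. -/
structure Flags where
  bangL : Bool := false
  bangR : Bool := false
  bangRK : Bool := false
  bangR4 : Bool := false
  bangRK4 : Bool := false
  contr : Bool := false     -- single-formula contraction C
  contrK : Bool := false    -- structural contraction CK
  weak : Bool := false      -- weakening W
  cut : Bool := false

/-- Sequent derivability in MacLL extended by the rules selected by `fl`,
with nonlogical axioms `Ax`. -/
inductive Der (fl : Flags) (Ax : Set (Str × Fm)) : Str → Fm → Prop where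
  | ax {Γ : Str} {C : Fm} : (Γ, C) ∈ Ax → Der fl Ax Γ C
  | init (A : Fm) : Der fl Ax (.leaf A) A
  | tensL (Γ : Ctx) {A B C : Fm} :
      Der fl Ax (Γ.fill (.comma (.leaf A) (.leaf B))) C →
      Der fl Ax (Γ.fill (.leaf (.tens A B))) C
  | tensR {Γ Δ : Str} {A B : Fm} :
      Der fl Ax Γ A → Der fl Ax Δ B → Der fl Ax (.comma Γ Δ) (.tens A B)
  | arrL (Γ : Ctx) {Δ : Str} {A B C : Fm} :
      Der fl Ax Δ A → Der fl Ax (Γ.fill (.leaf B)) C →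
      Der fl Ax (Γ.fill (.comma Δ (.leaf (.arr A B)))) C
  | arrR {Γ : Str} {A B : Fm} :
      Der fl Ax (.comma (.leaf A) Γ) B → Der fl Ax Γ (.arr A B)
  | larrL (Γ : Ctx) {Δ : Str} {A B C : Fm} :
      Der fl Ax Δ A → Der fl Ax (Γ.fill (.leaf B)) C →
      Der fl Ax (Γ.fill (.comma (.leaf (.larr B A)) Δ)) C
  | larrR {Γ : Str} {A B : Fm} :
      Der fl Ax (.comma Γ (.leaf A)) B → Der fl Ax Γ (.larr B A)
  | oneL (Γ : Ctx) {C : Fm} :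
      Der fl Ax (Γ.fill .emp) C → Der fl Ax (Γ.fill (.leaf .one)) C
  | oneR : Der fl Ax .emp .one
  | bangL (Γ : Ctx) {A C : Fm} : fl.bangL = true →
      Der fl Ax (Γ.fill (.leaf A)) C → Der fl Ax (Γ.fill (.leaf (.bang A))) C
  | bangR {A C : Fm} : fl.bangR = true →
      Der fl Ax (.leaf A) C → Der fl Ax (.leaf (.bang A)) (.bang C)
  | bangRK {Γ : Str} {C : Fm} : fl.bangRK = true →
      Der fl Ax Γ C → Der fl Ax (bangStr Γ) (.bang C)
  | bangR4 {A C : Fm} : fl.bangR4 = true →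
      Der fl Ax (.leaf (.bang A)) C → Der fl Ax (.leaf (.bang A)) (.bang C)
  | bangRK4 {Γ Γ' : Str} {C : Fm} : fl.bangRK4 = true →
      StarBang Γ Γ' → Der fl Ax Γ' C → Der fl Ax (bangStr Γ) (.bang C)
  | contr (Γ : Ctx) {A : Fm} {C : Fm} : fl.contr = true →
      Der fl Ax (Γ.fill (.comma (.leaf (.bang A)) (.leaf (.bang A)))) C →
      Der fl Ax (Γ.fill (.leaf (.bang A))) C
  | contrK (Γ : Ctx) {Δ : Str} {C : Fm} : fl.contrK = true → Δ.proper →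
      Der fl Ax (Γ.fill (.comma (bangStr Δ) (bangStr Δ))) C →
      Der fl Ax (Γ.fill (bangStr Δ)) C
  | weak (Γ : Ctx) {A C : Fm} : fl.weak = true →
      Der fl Ax (Γ.fill .emp) C → Der fl Ax (Γ.fill (.leaf (.bang A))) C
  | cut (Γ : Ctx) {Δ : Str} {A C : Fm} : fl.cut = true →
      Der fl Ax Δ A → Der fl Ax (Γ.fill (.leaf A)) C →
      Der fl Ax (Γ.fill Δ) C

/-- Plain MacLL (no modal or structural rules, no cut). -/
def macll : Flags := {}

/-- !_{t}MacLL : MacLL + !L + !R, cut-free. -/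
def sysT : Flags := { bangL := true, bangR := true }

/-! ### Auxiliary development for cut admissibility -/

/-- Composition of one-hole contexts. -/
def Ctx.comp : Ctx → Ctx → Ctx
  | .hole, e => e
  | .commaL c Γ, e => .commaL (Ctx.comp c e) Γ
  | .commaR Γ c, e => .commaR Γ (Ctx.comp c e)

@[simp] lemma Ctx.comp_fill (c d : Ctx) (s : Str) :
    (Ctx.comp c d).fill s = c.fill (d.fill s) := by
  induction c <;> simp [Ctx.comp, Ctx.fill, *]

@[simp] lemma Ctx.comp_hole (c : Ctx) : Ctx.comp c .hole = c := by
  induction c <;> simp [Ctx.comp, *]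

lemma Ctx.fill_eq_leaf {c : Ctx} {s : Str} {X : Fm} (h : c.fill s = .leaf X) :
    c = .hole ∧ s = .leaf X := by
  cases c with
  | hole => exact ⟨rfl, h⟩
  | commaL c' Γ => exact absurd h (by simp [Ctx.fill])
  | commaR Γ c' => exact absurd h (by simp [Ctx.fill])

lemma Ctx.fill_eq_emp {c : Ctx} {s : Str} (h : c.fill s = .emp) :
    c = .hole ∧ s = .emp := by
  cases c with
  | hole => exact ⟨rfl, h⟩
  | commaL c' Γ => exact absurd h (by simp [Ctx.fill])
  | commaR Γ c' => exact absurd h (by simp [Ctx.fill])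

lemma Ctx.fill_leaf_eq_comma {c : Ctx} {A : Fm} {a b : Str}
    (h : c.fill (.leaf A) = .comma a b) :
    (∃ c', c = .commaL c' b ∧ c'.fill (.leaf A) = a) ∨
    (∃ c', c = .commaR a c' ∧ c'.fill (.leaf A) = b) := by
  cases c with
  | hole => exact absurd h (by simp [Ctx.fill])
  | commaL c' Γ =>
      simp only [Ctx.fill, Str.comma.injEq] at h
      exact Or.inl ⟨c', by rw [h.2], h.1⟩
  | commaR Γ c' =>
      simp only [Ctx.fill, Str.comma.injEq] at h
      exact Or.inr ⟨c', by rw [h.1], h.2⟩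

/-- Splitting lemma: two decompositions of the same structure are nested or disjoint. -/
lemma Ctx.split : ∀ (c d : Ctx) (s t : Str), c.fill s = d.fill t →
    (∃ e, c = d.comp e ∧ t = e.fill s) ∨
    (∃ e, d = c.comp e ∧ s = e.fill t) ∨
    (∃ e cl cr, c = Ctx.comp e (.commaL cl (cr.fill t)) ∧
        d = Ctx.comp e (.commaR (cl.fill s) cr)) ∨
    (∃ e cl cr, c = Ctx.comp e (.commaR (cl.fill t) cr) ∧
        d = Ctx.comp e (.commaL cl (cr.fill s))) := by
  intro c
  induction c with
  | hole =>
      intro d s t h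
      exact Or.inr (Or.inl ⟨d, rfl, h⟩)
  | commaL c' Γ₂ ih =>
      intro d s t h
      cases d with
      | hole => exact Or.inl ⟨.commaL c' Γ₂, rfl, h.symm⟩
      | commaL d' Δ₂ =>
          simp only [Ctx.fill, Str.comma.injEq] at h
          obtain ⟨h1, h2⟩ := h
          subst h2
          rcases ih d' s t h1 with ⟨e, hc, ht⟩ | ⟨e, hd, hs⟩ |
              ⟨e, cl, cr, hc, hd⟩ | ⟨e, cl, cr, hc, hd⟩
          · exact Or.inl ⟨e, by rw [hc]; rfl, ht⟩
          · exact Or.inr (Or.inl ⟨e, by rw [hd]; rfl, hs⟩)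
          · exact Or.inr (Or.inr (Or.inl ⟨.commaL e Γ₂, cl, cr,
              by rw [hc]; rfl, by rw [hd]; rfl⟩))
          · exact Or.inr (Or.inr (Or.inr ⟨.commaL e Γ₂, cl, cr,
              by rw [hc]; rfl, by rw [hd]; rfl⟩))
      | commaR Δ₁ d' =>
          simp only [Ctx.fill, Str.comma.injEq] at h
          obtain ⟨h1, h2⟩ := h
          exact Or.inr (Or.inr (Or.inl ⟨.hole, c', d',
            by simp [Ctx.comp, h2], by simp [Ctx.comp, h1]⟩))
  | commaR Γ₁ c' ih =>
      intro d s t h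
      cases d with
      | hole => exact Or.inl ⟨.commaR Γ₁ c', rfl, h.symm⟩
      | commaL d' Δ₂ =>
          simp only [Ctx.fill, Str.comma.injEq] at h
          obtain ⟨h1, h2⟩ := h
          exact Or.inr (Or.inr (Or.inr ⟨.hole, d', c',
            by simp [Ctx.comp, h1], by simp [Ctx.comp, h2]⟩))
      | commaR Δ₁ d' =>
          simp only [Ctx.fill, Str.comma.injEq] at h
          obtain ⟨h1, h2⟩ := h
          subst h1
          rcases ih d' s t h2 with ⟨e, hc, ht⟩ | ⟨e, hd, hs⟩ |
              ⟨e, cl, cr, hc, hd⟩ | ⟨e, cl, cr, hc, hd⟩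
          · exact Or.inl ⟨e, by rw [hc]; rfl, ht⟩
          · exact Or.inr (Or.inl ⟨e, by rw [hd]; rfl, hs⟩)
          · exact Or.inr (Or.inr (Or.inl ⟨.commaR Γ₁ e, cl, cr,
              by rw [hc]; rfl, by rw [hd]; rfl⟩))
          · exact Or.inr (Or.inr (Or.inr ⟨.commaR Γ₁ e, cl, cr,
              by rw [hc]; rfl, by rw [hd]; rfl⟩))

/-- Height-indexed cut-free derivability in !_{t}MacLL. -/
inductive D : Nat → Str → Fm → Prop where
  | init (n : Nat) (A : Fm) : D n (.leaf A) A
  | tensL (n : Nat) (Γ : Ctx) {A B C : Fm} :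
      D n (Γ.fill (.comma (.leaf A) (.leaf B))) C →
      D (n+1) (Γ.fill (.leaf (.tens A B))) C
  | tensR {n : Nat} {Γ Δ : Str} {A B : Fm} :
      D n Γ A → D n Δ B → D (n+1) (.comma Γ Δ) (.tens A B)
  | arrL (n : Nat) (Γ : Ctx) {Δ : Str} {A B C : Fm} :
      D n Δ A → D n (Γ.fill (.leaf B)) C →
      D (n+1) (Γ.fill (.comma Δ (.leaf (.arr A B)))) C
  | arrR {n : Nat} {Γ : Str} {A B : Fm} :
      D n (.comma (.leaf A) Γ) B → D (n+1) Γ (.arr A B)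
  | larrL (n : Nat) (Γ : Ctx) {Δ : Str} {A B C : Fm} :
      D n Δ A → D n (Γ.fill (.leaf B)) C →
      D (n+1) (Γ.fill (.comma (.leaf (.larr B A)) Δ)) C
  | larrR {n : Nat} {Γ : Str} {A B : Fm} :
      D n (.comma Γ (.leaf A)) B → D (n+1) Γ (.larr B A)
  | oneL (n : Nat) (Γ : Ctx) {C : Fm} :
      D n (Γ.fill .emp) C → D (n+1) (Γ.fill (.leaf .one)) C
  | oneR (n : Nat) : D n .emp .one
  | bangL (n : Nat) (Γ : Ctx) {A C : Fm} :
      D n (Γ.fill (.leaf A)) C → D (n+1) (Γ.fill (.leaf (.bang A))) C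
  | bangR {n : Nat} {A C : Fm} :
      D n (.leaf A) C → D (n+1) (.leaf (.bang A)) (.bang C)

lemma D.step {n : Nat} {Γ : Str} {C : Fm} (h : D n Γ C) : D (n+1) Γ C := by
  induction h with
  | init n A => exact .init _ _
  | tensL n Γ h ih => exact .tensL _ Γ ih
  | tensR h1 h2 ih1 ih2 => exact .tensR ih1 ih2
  | arrL n Γ h1 h2 ih1 ih2 => exact .arrL _ Γ ih1 ih2
  | arrR h ih => exact .arrR ih
  | larrL n Γ h1 h2 ih1 ih2 => exact .larrL _ Γ ih1 ih2
  | larrR h ih => exact .larrR ih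
  | oneL n Γ h ih => exact .oneL _ Γ ih
  | oneR n => exact .oneR _
  | bangL n Γ h ih => exact .bangL _ Γ ih
  | bangR h ih => exact .bangR ih

lemma D.mono {n m : Nat} {Γ : Str} {C : Fm} (h : D n Γ C) (hnm : n ≤ m) : D m Γ C := by
  induction hnm with
  | refl => exact h
  | step _ ih => exact ih.step

lemma D.toDer {n : Nat} {Γ : Str} {C : Fm} (h : D n Γ C) : Der sysT ∅ Γ C := by
  induction h with
  | init n A => exact .init A
  | tensL n Γ h ih => exact .tensL Γ ih
  | tensR h1 h2 ih1 ih2 => exact .tensR ih1 ih2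
  | arrL n Γ h1 h2 ih1 ih2 => exact .arrL Γ ih1 ih2
  | arrR h ih => exact .arrR ih
  | larrL n Γ h1 h2 ih1 ih2 => exact .larrL Γ ih1 ih2
  | larrR h ih => exact .larrR ih
  | oneL n Γ h ih => exact .oneL Γ ih
  | oneR n => exact .oneR
  | bangL n Γ h ih => exact .bangL Γ rfl ih
  | bangR h ih => exact .bangR rfl ih

lemma D.ofDer {Γ : Str} {C : Fm} (h : Der sysT ∅ Γ C) : ∃ n, D n Γ C := by
  induction h with
  | ax hmem => exact absurd hmem (Set.notMem_empty _)
  | init A => exact ⟨0, .init 0 A⟩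
  | tensL Γ h ih => obtain ⟨n, hn⟩ := ih; exact ⟨n+1, .tensL n Γ hn⟩
  | tensR h1 h2 ih1 ih2 =>
      obtain ⟨n, hn⟩ := ih1; obtain ⟨m, hm⟩ := ih2
      exact ⟨max n m + 1, .tensR (hn.mono (Nat.le_max_left _ _))
        (hm.mono (Nat.le_max_right _ _))⟩
  | arrL Γ h1 h2 ih1 ih2 =>
      obtain ⟨n, hn⟩ := ih1; obtain ⟨m, hm⟩ := ih2
      exact ⟨max n m + 1, .arrL _ Γ (hn.mono (Nat.le_max_left _ _))
        (hm.mono (Nat.le_max_right _ _))⟩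
  | arrR h ih => obtain ⟨n, hn⟩ := ih; exact ⟨n+1, .arrR hn⟩
  | larrL Γ h1 h2 ih1 ih2 =>
      obtain ⟨n, hn⟩ := ih1; obtain ⟨m, hm⟩ := ih2
      exact ⟨max n m + 1, .larrL _ Γ (hn.mono (Nat.le_max_left _ _))
        (hm.mono (Nat.le_max_right _ _))⟩
  | larrR h ih => obtain ⟨n, hn⟩ := ih; exact ⟨n+1, .larrR hn⟩
  | oneL Γ h ih => obtain ⟨n, hn⟩ := ih; exact ⟨n+1, .oneL n Γ hn⟩
  | oneR => exact ⟨0, .oneR 0⟩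
  | bangL Γ hfl h ih => obtain ⟨n, hn⟩ := ih; exact ⟨n+1, .bangL n Γ hn⟩
  | bangR hfl h ih => obtain ⟨n, hn⟩ := ih; exact ⟨n+1, .bangR hn⟩
  | bangRK hfl h ih => exact absurd hfl (by decide)
  | bangR4 hfl h ih => exact absurd hfl (by decide)
  | bangRK4 hfl hsb h ih => exact absurd hfl (by decide)
  | contr Γ hfl h ih => exact absurd hfl (by decide)
  | contrK Γ hfl hp h ih => exact absurd hfl (by decide)
  | weak Γ hfl h ih => exact absurd hfl (by decide)
  | cut Γ hfl h1 h2 ih1 ih2 => exact absurd hfl (by decide)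
/-- Right commutation / principal-case dispatch for cut. -/
lemma cutR (A : Fm) (Δ : Str) (hCf : Der sysT ∅ Δ A)
    (prinOne : A = .one →
      ∀ m' (Γ' : Ctx) C', D m' (Γ'.fill .emp) C' → Der sysT ∅ (Γ'.fill Δ) C')
    (prinTens : ∀ A₁ A₂, A = .tens A₁ A₂ →
      ∀ m' (Γ' : Ctx) C', D m' (Γ'.fill (.comma (.leaf A₁) (.leaf A₂))) C' →
      Der sysT ∅ (Γ'.fill Δ) C')
    (prinArr : ∀ A₁ A₂, A = .arr A₁ A₂ →
      ∀ m₁ m₂ (Δ₀ : Str) (Γ' : Ctx) C', D m₁ Δ₀ A₁ → D m₂ (Γ'.fill (.leaf A₂)) C' →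
      Der sysT ∅ (Γ'.fill (.comma Δ₀ Δ)) C')
    (prinLarr : ∀ A₁ A₂, A = .larr A₂ A₁ →
      ∀ m₁ m₂ (Δ₀ : Str) (Γ' : Ctx) C', D m₁ Δ₀ A₁ → D m₂ (Γ'.fill (.leaf A₂)) C' →
      Der sysT ∅ (Γ'.fill (.comma Δ Δ₀)) C')
    (prinBangL : ∀ A₀, A = .bang A₀ →
      ∀ m' (Γ' : Ctx) C', D m' (Γ'.fill (.leaf A₀)) C' → Der sysT ∅ (Γ'.fill Δ) C')
    (prinBangR : ∀ A₀, A = .bang A₀ →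
      ∀ m' C₀, D m' (.leaf A₀) C₀ → Der sysT ∅ Δ (.bang C₀)) :
    ∀ (m : Nat) (Γ : Ctx) (C : Fm), D m (Γ.fill (.leaf A)) C → Der sysT ∅ (Γ.fill Δ) C := by
  intro m
  induction m using Nat.strong_induction_on with
  | _ m ih =>
  intro Γ C hp2
  obtain ⟨S, hS⟩ : ∃ S, Ctx.fill Γ (Str.leaf A) = S := ⟨_, rfl⟩
  rw [hS] at hp2
  cases hp2 with
  | init n A' =>
      obtain ⟨hΓ, hA⟩ := Ctx.fill_eq_leaf hS
      subst hΓ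
      injection hA with hA
      subst hA
      simpa [Ctx.fill] using hCf
  | tensL n d h =>
      rename_i A₁ B₁
      rcases Ctx.split Γ d _ _ hS with ⟨e, hc, ht⟩ | ⟨e, hd, hs⟩ |
          ⟨e, cl, cr, hc, hd⟩ | ⟨e, cl, cr, hc, hd⟩
      · obtain ⟨he, hA⟩ := Ctx.fill_eq_leaf ht.symm
        subst he
        injection hA with hA
        subst hA
        have hΓ : Γ = d := by simpa using hc
        subst hΓ
        exact prinTens A₁ B₁ rfl n _ _ h
      · obtain ⟨he, hA⟩ := Ctx.fill_eq_leaf hs.symm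
        subst he
        injection hA with hA
        subst hA
        have hΓ : d = Γ := by simpa using hd
        subst hΓ
        exact prinTens A₁ B₁ rfl n _ _ h
      · subst hc; subst hd
        have h' : D n ((Ctx.comp e (.commaL cl
            (cr.fill (.comma (.leaf A₁) (.leaf B₁))))).fill (.leaf A)) C := by
          simpa [Ctx.fill] using h
        have hcut := ih n (by omega) _ _ h'
        have hres := Der.tensL (fl := sysT) (Ax := ∅)
          (Ctx.comp e (.commaR (cl.fill Δ) cr)) (A := A₁) (B := B₁)
          (by simpa [Ctx.fill] using hcut)
        simpa [Ctx.fill] using hres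
      · subst hc; subst hd
        have h' : D n ((Ctx.comp e (.commaR
            (cl.fill (.comma (.leaf A₁) (.leaf B₁))) cr)).fill (.leaf A)) C := by
          simpa [Ctx.fill] using h
        have hcut := ih n (by omega) _ _ h'
        have hres := Der.tensL (fl := sysT) (Ax := ∅)
          (Ctx.comp e (.commaL cl (cr.fill Δ))) (A := A₁) (B := B₁)
          (by simpa [Ctx.fill] using hcut)
        simpa [Ctx.fill] using hres
  | tensR h₁ h₂ =>
      rename_i n Γ₁ Γ₂ B₁ B₂
      rcases Ctx.fill_leaf_eq_comma hS with ⟨Γ', hΓ, hfill⟩ | ⟨Γ', hΓ, hfill⟩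
      · subst hΓ
        have hcut := ih n (by omega) Γ' B₁ (by rw [hfill]; exact h₁)
        have := Der.tensR hcut h₂.toDer
        simpa [Ctx.fill] using this
      · subst hΓ
        have hcut := ih n (by omega) Γ' B₂ (by rw [hfill]; exact h₂)
        have := Der.tensR h₁.toDer hcut
        simpa [Ctx.fill] using this
  | arrL n d h₁ h₂ =>
      rename_i Δ₀ A₁ B₁
      rcases Ctx.split Γ d _ _ hS with ⟨e, hc, ht⟩ | ⟨e, hd, hs⟩ |
          ⟨e, cl, cr, hc, hd⟩ | ⟨e, cl, cr, hc, hd⟩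
      · rcases Ctx.fill_leaf_eq_comma ht.symm with ⟨e', he, hfill⟩ | ⟨e', he, hfill⟩
        · subst he; subst hc
          have hcut := ih n (by omega) e' A₁ (by rw [hfill]; exact h₁)
          have hres := Der.arrL (fl := sysT) (Ax := ∅) d hcut h₂.toDer
          simpa [Ctx.fill] using hres
        · obtain ⟨he', hA⟩ := Ctx.fill_eq_leaf hfill
          subst he'
          injection hA with hA
          subst hA
          subst he; subst hc
          have := prinArr A₁ B₁ rfl n n Δ₀ d C h₁ h₂
          simpa [Ctx.fill] using this
      · obtain ⟨he, habs⟩ := Ctx.fill_eq_leaf hs.symm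
        exact absurd habs (by simp)
      · subst hc; subst hd
        have h' : D n ((Ctx.comp e (.commaL cl (cr.fill (.leaf B₁)))).fill (.leaf A)) C := by
          simpa [Ctx.fill] using h₂
        have hcut := ih n (by omega) _ _ h'
        have hres := Der.arrL (fl := sysT) (Ax := ∅)
          (Ctx.comp e (.commaR (cl.fill Δ) cr)) h₁.toDer
          (by simpa [Ctx.fill] using hcut)
        simpa [Ctx.fill] using hres
      · subst hc; subst hd
        have h' : D n ((Ctx.comp e (.commaR (cl.fill (.leaf B₁)) cr)).fill (.leaf A)) C := by
          simpa [Ctx.fill] using h₂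
        have hcut := ih n (by omega) _ _ h'
        have hres := Der.arrL (fl := sysT) (Ax := ∅)
          (Ctx.comp e (.commaL cl (cr.fill Δ))) h₁.toDer
          (by simpa [Ctx.fill] using hcut)
        simpa [Ctx.fill] using hres
  | arrR h =>
      subst hS
      rename_i n A₁ B₁
      have h' : D n ((Ctx.commaR (.leaf A₁) Γ).fill (.leaf A)) B₁ := by
        simpa [Ctx.fill] using h
      have hcut := ih n (by omega) _ _ h'
      exact Der.arrR (by simpa [Ctx.fill] using hcut)
  | larrL n d h₁ h₂ =>
      rename_i Δ₀ A₁ B₁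
      rcases Ctx.split Γ d _ _ hS with ⟨e, hc, ht⟩ | ⟨e, hd, hs⟩ |
          ⟨e, cl, cr, hc, hd⟩ | ⟨e, cl, cr, hc, hd⟩
      · rcases Ctx.fill_leaf_eq_comma ht.symm with ⟨e', he, hfill⟩ | ⟨e', he, hfill⟩
        · obtain ⟨he', hA⟩ := Ctx.fill_eq_leaf hfill
          subst he'
          injection hA with hA
          subst hA
          subst he; subst hc
          have := prinLarr A₁ B₁ rfl n n Δ₀ d C h₁ h₂
          simpa [Ctx.fill] using this
        · subst he; subst hc
          have hcut := ih n (by omega) e' A₁ (by rw [hfill]; exact h₁)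
          have hres := Der.larrL (fl := sysT) (Ax := ∅) d hcut h₂.toDer
          simpa [Ctx.fill] using hres
      · obtain ⟨he, habs⟩ := Ctx.fill_eq_leaf hs.symm
        exact absurd habs (by simp)
      · subst hc; subst hd
        have h' : D n ((Ctx.comp e (.commaL cl (cr.fill (.leaf B₁)))).fill (.leaf A)) C := by
          simpa [Ctx.fill] using h₂
        have hcut := ih n (by omega) _ _ h'
        have hres := Der.larrL (fl := sysT) (Ax := ∅)
          (Ctx.comp e (.commaR (cl.fill Δ) cr)) h₁.toDer
          (by simpa [Ctx.fill] using hcut)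
        simpa [Ctx.fill] using hres
      · subst hc; subst hd
        have h' : D n ((Ctx.comp e (.commaR (cl.fill (.leaf B₁)) cr)).fill (.leaf A)) C := by
          simpa [Ctx.fill] using h₂
        have hcut := ih n (by omega) _ _ h'
        have hres := Der.larrL (fl := sysT) (Ax := ∅)
          (Ctx.comp e (.commaL cl (cr.fill Δ))) h₁.toDer
          (by simpa [Ctx.fill] using hcut)
        simpa [Ctx.fill] using hres
  | larrR h =>
      subst hS
      rename_i n A₁ B₁
      have h' : D n ((Ctx.commaL Γ (.leaf A₁)).fill (.leaf A)) B₁ := by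
        simpa [Ctx.fill] using h
      have hcut := ih n (by omega) _ _ h'
      exact Der.larrR (by simpa [Ctx.fill] using hcut)
  | oneL n d h =>
      rcases Ctx.split Γ d _ _ hS with ⟨e, hc, ht⟩ | ⟨e, hd, hs⟩ |
          ⟨e, cl, cr, hc, hd⟩ | ⟨e, cl, cr, hc, hd⟩
      · obtain ⟨he, hA⟩ := Ctx.fill_eq_leaf ht.symm
        subst he
        injection hA with hA
        subst hA
        have hΓ : Γ = d := by simpa using hc
        subst hΓ
        exact prinOne rfl n _ _ h
      · obtain ⟨he, hA⟩ := Ctx.fill_eq_leaf hs.symm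
        subst he
        injection hA with hA
        subst hA
        have hΓ : d = Γ := by simpa using hd
        subst hΓ
        exact prinOne rfl n _ _ h
      · subst hc; subst hd
        have h' : D n ((Ctx.comp e (.commaL cl (cr.fill .emp))).fill (.leaf A)) C := by
          simpa [Ctx.fill] using h
        have hcut := ih n (by omega) _ _ h'
        have hres := Der.oneL (fl := sysT) (Ax := ∅)
          (Ctx.comp e (.commaR (cl.fill Δ) cr))
          (by simpa [Ctx.fill] using hcut)
        simpa [Ctx.fill] using hres
      · subst hc; subst hd
        have h' : D n ((Ctx.comp e (.commaR (cl.fill .emp) cr)).fill (.leaf A)) C := by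
          simpa [Ctx.fill] using h
        have hcut := ih n (by omega) _ _ h'
        have hres := Der.oneL (fl := sysT) (Ax := ∅)
          (Ctx.comp e (.commaL cl (cr.fill Δ)))
          (by simpa [Ctx.fill] using hcut)
        simpa [Ctx.fill] using hres
  | oneR n =>
      obtain ⟨hΓ, habs⟩ := Ctx.fill_eq_emp hS
      exact absurd habs (by simp)
  | bangL n d h =>
      rename_i A₀
      rcases Ctx.split Γ d _ _ hS with ⟨e, hc, ht⟩ | ⟨e, hd, hs⟩ |
          ⟨e, cl, cr, hc, hd⟩ | ⟨e, cl, cr, hc, hd⟩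
      · obtain ⟨he, hA⟩ := Ctx.fill_eq_leaf ht.symm
        subst he
        injection hA with hA
        subst hA
        have hΓ : Γ = d := by simpa using hc
        subst hΓ
        exact prinBangL A₀ rfl n _ _ h
      · obtain ⟨he, hA⟩ := Ctx.fill_eq_leaf hs.symm
        subst he
        injection hA with hA
        subst hA
        have hΓ : d = Γ := by simpa using hd
        subst hΓ
        exact prinBangL A₀ rfl n _ _ h
      · subst hc; subst hd
        have h' : D n ((Ctx.comp e (.commaL cl (cr.fill (.leaf A₀)))).fill (.leaf A)) C := by
          simpa [Ctx.fill] using h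
        have hcut := ih n (by omega) _ _ h'
        have hres := Der.bangL (fl := sysT) (Ax := ∅)
          (Ctx.comp e (.commaR (cl.fill Δ) cr)) rfl
          (by simpa [Ctx.fill] using hcut)
        simpa [Ctx.fill] using hres
      · subst hc; subst hd
        have h' : D n ((Ctx.comp e (.commaR (cl.fill (.leaf A₀)) cr)).fill (.leaf A)) C := by
          simpa [Ctx.fill] using h
        have hcut := ih n (by omega) _ _ h'
        have hres := Der.bangL (fl := sysT) (Ax := ∅)
          (Ctx.comp e (.commaL cl (cr.fill Δ))) rfl
          (by simpa [Ctx.fill] using hcut)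
        simpa [Ctx.fill] using hres
  | bangR h =>
      rename_i n A₀ C₀
      obtain ⟨hΓ, hA⟩ := Ctx.fill_eq_leaf hS
      subst hΓ
      injection hA with hA
      subst hA
      have := prinBangR A₀ rfl n C₀ h
      simpa [Ctx.fill] using this
/-- Cut admissibility on the height-indexed system. -/
theorem cutD (A : Fm) (n : Nat) (Δ : Str) (m : Nat) (Γ : Ctx) (C : Fm)
    (h1 : D n Δ A) (h2 : D m (Γ.fill (.leaf A)) C) :
    Der sysT ∅ (Γ.fill Δ) C := by
  cases h1 with
  | init n A =>
      exact h2.toDer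
  | tensL n' c h =>
      rename_i A₁ B₁
      have hcut := cutD A n' (c.fill (.comma (.leaf A₁) (.leaf B₁))) m Γ C h h2
      have hres := Der.tensL (fl := sysT) (Ax := ∅) (Ctx.comp Γ c) (A := A₁) (B := B₁)
        (by simpa [Ctx.fill] using hcut)
      simpa [Ctx.fill] using hres
  | arrL n' c h₁ h =>
      rename_i Δ₀ A₁ B₁
      have hcut := cutD A n' (c.fill (.leaf B₁)) m Γ C h h2
      have hres := Der.arrL (fl := sysT) (Ax := ∅) (Ctx.comp Γ c) h₁.toDer
        (by simpa [Ctx.fill] using hcut)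
      simpa [Ctx.fill] using hres
  | larrL n' c h₁ h =>
      rename_i Δ₀ A₁ B₁
      have hcut := cutD A n' (c.fill (.leaf B₁)) m Γ C h h2
      have hres := Der.larrL (fl := sysT) (Ax := ∅) (Ctx.comp Γ c) h₁.toDer
        (by simpa [Ctx.fill] using hcut)
      simpa [Ctx.fill] using hres
  | oneL n' c h =>
      have hcut := cutD A n' (c.fill .emp) m Γ C h h2
      have hres := Der.oneL (fl := sysT) (Ax := ∅) (Ctx.comp Γ c)
        (by simpa [Ctx.fill] using hcut)
      simpa [Ctx.fill] using hres
  | bangL n' c h =>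
      rename_i A₀
      have hcut := cutD A n' (c.fill (.leaf A₀)) m Γ C h h2
      have hres := Der.bangL (fl := sysT) (Ax := ∅) (Ctx.comp Γ c) rfl
        (by simpa [Ctx.fill] using hcut)
      simpa [Ctx.fill] using hres
  | tensR h₁ h₂ =>
      rename_i n' Γ₁ Γ₂ A₁ A₂
      refine cutR _ _ (Der.tensR h₁.toDer h₂.toDer) ?_ ?_ ?_ ?_ ?_ ?_ m Γ C h2
      · intro heq; simp at heq
      · rintro B₁ B₂ heq m' Γ' C' hp
        injection heq with e₁ e₂
        subst e₁; subst e₂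
        have c1 := cutD A₁ n' Γ₁ m' (Ctx.comp Γ' (.commaL .hole (.leaf A₂))) C' h₁
          (by simpa [Ctx.fill] using hp)
        obtain ⟨k, hk⟩ := D.ofDer c1
        have c2 := cutD A₂ n' Γ₂ k (Ctx.comp Γ' (.commaR Γ₁ .hole)) C' h₂
          (by simpa [Ctx.fill] using hk)
        simpa [Ctx.fill] using c2
      · rintro B₁ B₂ heq; simp at heq
      · rintro B₁ B₂ heq; simp at heq
      · rintro B₀ heq; simp at heq
      · rintro B₀ heq; simp at heq
  | arrR h =>
      rename_i n' A₁ A₂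
      refine cutR _ _ (Der.arrR h.toDer) ?_ ?_ ?_ ?_ ?_ ?_ m Γ C h2
      · intro heq; simp at heq
      · rintro B₁ B₂ heq; simp at heq
      · rintro B₁ B₂ heq m₁ m₂ Δ₀ Γ' C' hp₁ hp₂
        injection heq with e₁ e₂
        subst e₁; subst e₂
        have c1 := cutD A₂ n' (.comma (.leaf A₁) Δ) m₂ Γ' C' h hp₂
        obtain ⟨k, hk⟩ := D.ofDer c1
        have c2 := cutD A₁ m₁ Δ₀ k (Ctx.comp Γ' (.commaL .hole Δ)) C' hp₁
          (by simpa [Ctx.fill] using hk)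
        simpa [Ctx.fill] using c2
      · rintro B₁ B₂ heq; simp at heq
      · rintro B₀ heq; simp at heq
      · rintro B₀ heq; simp at heq
  | larrR h =>
      rename_i n' A₁ B₁
      refine cutR _ _ (Der.larrR h.toDer) ?_ ?_ ?_ ?_ ?_ ?_ m Γ C h2
      · intro heq; simp at heq
      · rintro B₁' B₂' heq; simp at heq
      · rintro B₁' B₂' heq; simp at heq
      · rintro B₁' B₂' heq m₁ m₂ Δ₀ Γ' C' hp₁ hp₂
        injection heq with e₁ e₂
        subst e₁; subst e₂
        have c1 := cutD B₁ n' (.comma Δ (.leaf A₁)) m₂ Γ' C' h hp₂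
        obtain ⟨k, hk⟩ := D.ofDer c1
        have c2 := cutD A₁ m₁ Δ₀ k (Ctx.comp Γ' (.commaR Δ .hole)) C' hp₁
          (by simpa [Ctx.fill] using hk)
        simpa [Ctx.fill] using c2
      · rintro B₀ heq; simp at heq
      · rintro B₀ heq; simp at heq
  | oneR n' =>
      refine cutR _ _ Der.oneR ?_ ?_ ?_ ?_ ?_ ?_ m Γ C h2
      · intro _ m' Γ' C' hp; exact hp.toDer
      · rintro B₁ B₂ heq; simp at heq
      · rintro B₁ B₂ heq; simp at heq
      · rintro B₁ B₂ heq; simp at heq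
      · rintro B₀ heq; simp at heq
      · rintro B₀ heq; simp at heq
  | bangR h =>
      rename_i n' A₀ B₀
      refine cutR _ _ (Der.bangR rfl h.toDer) ?_ ?_ ?_ ?_ ?_ ?_ m Γ C h2
      · intro heq; simp at heq
      · rintro B₁ B₂ heq; simp at heq
      · rintro B₁ B₂ heq; simp at heq
      · rintro B₁ B₂ heq; simp at heq
      · rintro X heq m' Γ' C' hp
        injection heq with e
        subst e
        have c1 := cutD B₀ n' (.leaf A₀) m' Γ' C' h hp
        exact Der.bangL (fl := sysT) (Ax := ∅) Γ' rfl c1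
      · rintro X heq m' C₀' hp
        injection heq with e
        subst e
        have c1 := cutD B₀ n' (.leaf A₀) m' .hole C₀' h (by simpa [Ctx.fill] using hp)
        exact Der.bangR rfl (by simpa [Ctx.fill] using c1)
termination_by (sizeOf A, n)
decreasing_by all_goals
  subst_vars
  first
  | (apply Prod.Lex.right; omega)
  | (apply Prod.Lex.left
     simp only [Fm.tens.sizeOf_spec, Fm.arr.sizeOf_spec, Fm.larr.sizeOf_spec,
       Fm.bang.sizeOf_spec]
     omega)
/-- Cut admissibility for !_{t}MacLL. -/
theorem stmt4 (Δ : Str) (A : Fm) (Γ : Ctx) (C : Fm)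
    (h1 : Der sysT ∅ Δ A) (h2 : Der sysT ∅ (Γ.fill (.leaf A)) C) :
    Der sysT ∅ (Γ.fill Δ) C := by
  obtain ⟨n, hn⟩ := D.ofDer h1
  obtain ⟨m, hm⟩ := D.ofDer h2
  exact cutD A n Δ m Γ C hn hm
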